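/- Let T be a Turing machine with states Q, alphabet Σ, and transition function δ, and let Δ: (Q∖{q_halt}) × Σ^ℤ → Q × Σ^ℤ be its global transition function (apply δ to (q, t_0), write the new symbol at position 0, then shift the tape by ε ∈ {−1,0,+1}). If T is reversible (Δ is injective), then the countable generalized shift with pairs P₂ = {(−1, (t_{−1} q t_0)) : t_{−1}, t_0 ∈ Σ, q ∈ Q∖{q_halt}}, replacement J((−1,(t_{−1} q t_0))) = (t_{−1} t' q') if ε=+1, (q' t_{−1} t') if ε=−1, (t_{−1} q' t') if ε=0 where δ(q,t_0) = (q',t',ε), and shift H = ε, is injective on S_{P₂}, and it simulates Δ under the encoding (q, t) ↦ (...t_{−1}.q t_0 t_1...) ∈ (Q ⊔ Σ)^ℤ. -/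
import Mathlib


/-- `s` coincides with the pair `p = (n, I)` if the symbols of `s` at positions
`n, ..., n + |I| - 1` form the word `I`. -/
def Coincides {A : Type*} (s : ℤ → A) (p : ℤ × List A) : Prop :=
  ∀ (i : ℕ) (hi : i < p.2.length), s (p.1 + i) = p.2.get ⟨i, hi⟩

/-- The set of sequences coinciding with some pair of `P`. -/
def SP {A : Type*} (P : Set (ℤ × List A)) : Set (ℤ → A) :=
  {s | ∃ p ∈ P, Coincides s p}

/-- Every sequence coincides with at most one pair of `P`
(the defining condition of a countable generalized shift). -/
def AtMostOne {A : Type*} (P : Set (ℤ × List A)) : Prop :=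
  ∀ s : ℤ → A, ∀ p ∈ P, ∀ q ∈ P, Coincides s p → Coincides s q → p = q

/-- Replace the symbols of `s` at positions `n, ..., n + |w| - 1` by the word `w`. -/
noncomputable def replaceWord {A : Type*} (s : ℤ → A) (n : ℤ) (w : List A) : ℤ → A :=
  fun k => if h : 0 ≤ k - n ∧ (k - n).toNat < w.length
    then w.get ⟨(k - n).toNat, h.2⟩ else s k

open scoped Classical in
/-- The countable generalized shift determined by the data `(P, J, H)`: if `s`
coincides with a (necessarily unique, when `AtMostOne P` holds) pair `p ∈ P`, replace
the word of `p` in `s` by `J p` and shift by `H p` (position `k` of the image is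
position `k + H p` of the replaced sequence); otherwise leave `s` unchanged. -/
noncomputable def cgsApply {A : Type*} (P : Set (ℤ × List A)) (J : ℤ × List A → List A)
    (H : ℤ × List A → ℤ) (s : ℤ → A) : ℤ → A :=
  if h : ∃ p ∈ P, Coincides s p then
    fun k => replaceWord s h.choose.1 (J h.choose) (k + H h.choose)
  else s

/-- The global transition function of a Turing machine with transition function `δ`:
apply `δ` to `(q, t₀)`, write the new symbol at position `0`, then shift the tape by
`ε ∈ {-1, 0, 1}` (position `k` of the new tape is position `k + ε` of the old). -/
def tmStep {Q S : Type*} [DecidableEq S] (δ : Q × S → Q × S × ℤ)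
    (c : Q × (ℤ → S)) : Q × (ℤ → S) :=
  ((δ (c.1, c.2 0)).1,
    fun k => Function.update c.2 0 (δ (c.1, c.2 0)).2.1 (k + (δ (c.1, c.2 0)).2.2))

/-- The encoding of a configuration `(q, t)` as the sequence `(...t₋₁ . q t₀ t₁ ...)`
over the alphabet `Q ⊕ Σ`. -/
def tmEnc {Q S : Type*} (c : Q × (ℤ → S)) : ℤ → (Q ⊕ S) :=
  fun k => if k < 0 then Sum.inr (c.2 k)
    else if k = 0 then Sum.inl c.1 else Sum.inr (c.2 (k - 1))

/-- The pairs `P₂ = {(-1, (t₋₁ q t₀)) : t₋₁, t₀ ∈ Σ, q ≠ q_halt}`. -/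
def tmPairs {Q S : Type*} (qhalt : Q) : Set (ℤ × List (Q ⊕ S)) :=
  {pr | ∃ (a b : S) (q : Q), q ≠ qhalt ∧
    pr = (-1, [Sum.inr a, Sum.inl q, Sum.inr b])}

/-- The replacement map `J` of the countable generalized shift associated with `δ`. -/
def tmJ {Q S : Type*} (δ : Q × S → Q × S × ℤ) :
    ℤ × List (Q ⊕ S) → List (Q ⊕ S) :=
  fun pr => match pr.2 with
  | [Sum.inr a, Sum.inl q, Sum.inr b] =>
      let r := δ (q, b)
      if r.2.2 = 1 then [Sum.inr a, Sum.inr r.2.1, Sum.inl r.1]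
      else if r.2.2 = -1 then [Sum.inl r.1, Sum.inr a, Sum.inr r.2.1]
      else [Sum.inr a, Sum.inl r.1, Sum.inr r.2.1]
  | _ => pr.2

/-- The shift map `H` of the countable generalized shift associated with `δ`. -/
def tmH {Q S : Type*} (δ : Q × S → Q × S × ℤ) : ℤ × List (Q ⊕ S) → ℤ :=
  fun pr => match pr.2 with
  | [Sum.inr _, Sum.inl q, Sum.inr b] => (δ (q, b)).2.2
  | _ => 0

section Aux
variable {Q : Type*} {S : Type*} [DecidableEq S]

lemma coincides3 {A : Type*} {s : ℤ → A} {x y z : A}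
    (h : Coincides s (-1, [x, y, z])) : s (-1) = x ∧ s 0 = y ∧ s 1 = z := by
  refine ⟨?_, ?_, ?_⟩
  · simpa using h 0 (by norm_num)
  · simpa using h 1 (by norm_num)
  · simpa using h 2 (by norm_num)

lemma coincides3' {A : Type*} {s : ℤ → A} {x y z : A}
    (h1 : s (-1) = x) (h2 : s 0 = y) (h3 : s 1 = z) :
    Coincides s (-1, [x, y, z]) := by
  intro i hi
  match i with
  | 0 => simpa using h1
  | 1 => simpa using h2
  | 2 => simpa using h3
  | n + 3 => simp at hi

lemma replaceWord3 {A : Type*} (s : ℤ → A) (x y z : A) (m : ℤ) :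
    replaceWord s (-1) [x, y, z] m =
      if m = -1 then x else if m = 0 then y else if m = 1 then z else s m := by
  unfold replaceWord
  rcases eq_or_ne m (-1) with rfl | h1
  · norm_num
  rcases eq_or_ne m 0 with rfl | h2
  · norm_num
  rcases eq_or_ne m 1 with rfl | h3
  · norm_num
    rfl
  have hcond : ¬(0 ≤ m - -1 ∧ (m - -1).toNat < ([x, y, z] : List A).length) := by
    simp only [List.length_cons, List.length_nil]
    omega
  rw [dif_neg hcond, if_neg h1, if_neg h2, if_neg h3]

lemma cgsApply_eval {A : Type*} (P : Set (ℤ × List A)) (J : ℤ × List A → List A)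
    (H : ℤ × List A → ℤ) (hA : AtMostOne P) (s : ℤ → A) (p : ℤ × List A)
    (hP : p ∈ P) (hC : Coincides s p) (k : ℤ) :
    cgsApply P J H s k = replaceWord s p.1 (J p) (k + H p) := by
  have h : ∃ p ∈ P, Coincides s p := ⟨p, hP, hC⟩
  have hpe : h.choose = p := hA s h.choose h.choose_spec.1 p hP h.choose_spec.2 hC
  unfold cgsApply
  rw [dif_pos h, hpe]

end Aux

lemma replaceWord_out {A : Type*} (s : ℤ → A) (n : ℤ) (w : List A) (m : ℤ)
    (h : ¬(0 ≤ m - n ∧ (m - n).toNat < w.length)) : replaceWord s n w m = s m := by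
  unfold replaceWord
  exact dif_neg h

section Delta
variable {Q : Type*} {S : Type*} [DecidableEq S]

lemma deltaA (qhalt : Q) (δ : Q × S → Q × S × ℤ)
    (hΔinj : ∀ c c' : Q × (ℤ → S), c.1 ≠ qhalt → c'.1 ≠ qhalt →
      tmStep δ c = tmStep δ c' → c = c')
    {q q' : Q} {b b' : S} (hq : q ≠ qhalt) (hq' : q' ≠ qhalt)
    (h1 : (δ (q, b)).1 = (δ (q', b')).1) :
    (δ (q, b)).2.2 = (δ (q', b')).2.2 := by
  by_contra hne
  classical
  set ε := (δ (q, b)).2.2 with hε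
  set ε' := (δ (q', b')).2.2 with hε'
  set c := (δ (q, b)).2.1 with hc
  set c' := (δ (q', b')).2.1 with hc'
  set t : ℤ → S := fun k => if k = ε - ε' then c' else b with ht
  have ht0 : t 0 = b := if_neg (by omega)
  set t' : ℤ → S := fun k => if k = 0 then b' else Function.update t 0 c (k - ε' + ε)
    with ht'
  have ht'0 : t' 0 = b' := if_pos rfl
  have hstep : tmStep δ (q, t) = tmStep δ (q', t') := by
    refine Prod.ext ?_ (funext fun k => ?_)
    · show (δ (q, t 0)).1 = (δ (q', t' 0)).1
      rw [ht0, ht'0]; exact h1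
    · show Function.update t 0 (δ (q, t 0)).2.1 (k + (δ (q, t 0)).2.2)
        = Function.update t' 0 (δ (q', t' 0)).2.1 (k + (δ (q', t' 0)).2.2)
      rw [ht0, ht'0, ← hε, ← hε', ← hc, ← hc']
      rcases eq_or_ne (k + ε') 0 with h0 | h0
      · have hk : k + ε = ε - ε' := by omega
        rw [hk, h0, Function.update_self, Function.update_of_ne (by omega), ht]
        simp
      · rw [Function.update_of_ne h0, ht']
        simp only [if_neg h0]
        congr 1
        omega
  have heq := hΔinj (q, t) (q', t') hq hq' hstep
  have hqe : q = q' := (Prod.ext_iff.mp heq).1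
  have htt : t = t' := (Prod.ext_iff.mp heq).2
  have hbe : b = b' := by rw [← ht0, htt, ht'0]
  exact hne (by rw [hε, hε', hqe, hbe])

lemma deltaB (qhalt : Q) (δ : Q × S → Q × S × ℤ)
    (hΔinj : ∀ c c' : Q × (ℤ → S), c.1 ≠ qhalt → c'.1 ≠ qhalt →
      tmStep δ c = tmStep δ c' → c = c')
    {q q' : Q} {b b' : S} (hq : q ≠ qhalt) (hq' : q' ≠ qhalt)
    (h1 : (δ (q, b)).1 = (δ (q', b')).1)
    (h2 : (δ (q, b)).2.1 = (δ (q', b')).2.1) :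
    q = q' ∧ b = b' := by
  classical
  have hεe : (δ (q, b)).2.2 = (δ (q', b')).2.2 := deltaA qhalt δ hΔinj hq hq' h1
  set t : ℤ → S := fun k => if k = 0 then b else b' with ht
  set t' : ℤ → S := fun _ => b' with ht'
  have ht0 : t 0 = b := if_pos rfl
  have ht'0 : t' 0 = b' := rfl
  have hstep : tmStep δ (q, t) = tmStep δ (q', t') := by
    refine Prod.ext ?_ (funext fun k => ?_)
    · show (δ (q, t 0)).1 = (δ (q', t' 0)).1
      rw [ht0, ht'0]; exact h1
    · show Function.update t 0 (δ (q, t 0)).2.1 (k + (δ (q, t 0)).2.2)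
        = Function.update t' 0 (δ (q', t' 0)).2.1 (k + (δ (q', t' 0)).2.2)
      rw [ht0, ht'0, ← hεe, ← h2]
      rcases eq_or_ne (k + (δ (q, b)).2.2) 0 with h0 | h0
      · rw [h0, Function.update_self, Function.update_self]
      · rw [Function.update_of_ne h0, Function.update_of_ne h0]
        simp only [ht, ht', if_neg h0]
  have heq := hΔinj (q, t) (q', t') hq hq' hstep
  have htt : t = t' := (Prod.ext_iff.mp heq).2
  exact ⟨(Prod.ext_iff.mp heq).1, by rw [← ht0, htt, ht'0]⟩

end Delta

/-- For a reversible Turing machine (injective global transition function `Δ` on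
non-halting configurations) the associated countable generalized shift is a genuine
countable generalized shift (each sequence coincides with at most one pair), is
injective on `S_{P₂}`, and simulates `Δ` under the encoding
`(q, t) ↦ (...t₋₁ . q t₀ t₁ ...)`. -/
theorem reversible_tm_cgs {Q S : Type*} [DecidableEq S] (qhalt : Q)
    (δ : Q × S → Q × S × ℤ)
    (hδrange : ∀ x, (δ x).2.2 = -1 ∨ (δ x).2.2 = 0 ∨ (δ x).2.2 = 1)
    (hΔinj : ∀ c c' : Q × (ℤ → S), c.1 ≠ qhalt → c'.1 ≠ qhalt →
      tmStep δ c = tmStep δ c' → c = c') :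
    AtMostOne (tmPairs qhalt : Set (ℤ × List (Q ⊕ S))) ∧
    Set.InjOn (cgsApply (tmPairs qhalt) (tmJ δ) (tmH δ)) (SP (tmPairs qhalt)) ∧
    ∀ (q : Q) (t : ℤ → S), q ≠ qhalt →
      cgsApply (tmPairs qhalt) (tmJ δ) (tmH δ) (tmEnc (q, t))
        = tmEnc (tmStep δ (q, t)) := by
  have hAMO : AtMostOne (tmPairs qhalt : Set (ℤ × List (Q ⊕ S))) := by
    rintro s p hp p' hp' hcp hcp'
    obtain ⟨a, b, qq, hne, rfl⟩ := hp
    obtain ⟨a', b', qq', hne', rfl⟩ := hp'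
    obtain ⟨h1, h2, h3⟩ := coincides3 hcp
    obtain ⟨h1', h2', h3'⟩ := coincides3 hcp'
    have ha : a = a' := by simpa using h1.symm.trans h1'
    have hqe : qq = qq' := by simpa using h2.symm.trans h2'
    have hb : b = b' := by simpa using h3.symm.trans h3'
    rw [ha, hqe, hb]
  refine ⟨hAMO, ?_, ?_⟩
  · intro s hs s' hs' hf
    obtain ⟨p, hp, hc⟩ := hs
    obtain ⟨a, b, qq, hqq, rfl⟩ := hp
    obtain ⟨p', hp', hc'⟩ := hs'
    obtain ⟨a', b', qq', hqq', rfl⟩ := hp'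
    have hfe : ∀ k, cgsApply (tmPairs qhalt) (tmJ δ) (tmH δ) s k =
        replaceWord s (-1) (tmJ δ ((-1 : ℤ), [Sum.inr a, Sum.inl qq, Sum.inr b]))
          (k + (δ (qq, b)).2.2) := fun k =>
      cgsApply_eval _ (tmJ δ) (tmH δ) hAMO s _ ⟨a, b, qq, hqq, rfl⟩ hc k
    have hfe' : ∀ k, cgsApply (tmPairs qhalt) (tmJ δ) (tmH δ) s' k =
        replaceWord s' (-1) (tmJ δ ((-1 : ℤ), [Sum.inr a', Sum.inl qq', Sum.inr b']))
          (k + (δ (qq', b')).2.2) := fun k =>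
      cgsApply_eval _ (tmJ δ) (tmH δ) hAMO s' _ ⟨a', b', qq', hqq', rfl⟩ hc' k
    have hzero : ∀ (a b : S) (qq : Q) (u : ℤ → Q ⊕ S),
        replaceWord u (-1) (tmJ δ ((-1 : ℤ), [Sum.inr a, Sum.inl qq, Sum.inr b]))
          ((0 : ℤ) + (δ (qq, b)).2.2) = Sum.inl (δ (qq, b)).1 := by
      intro a b qq u
      rcases hδrange (qq, b) with hε | hε | hε <;>
        (simp only [tmJ]; rw [hε]; norm_num [replaceWord3])
    have hq1 : (δ (qq, b)).1 = (δ (qq', b')).1 := by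
      have hz := (hfe 0).trans (hzero a b qq s)
      have hz' := (hfe' 0).trans (hzero a' b' qq' s')
      have := hz.symm.trans ((congrFun hf 0).trans hz')
      simpa using this
    have hεe : (δ (qq, b)).2.2 = (δ (qq', b')).2.2 := deltaA qhalt δ hΔinj hqq hqq' hq1
    have hkey : a = a' ∧ qq = qq' ∧ b = b' := by
      rcases hδrange (qq, b) with hε | hε | hε
      all_goals
        have hε' : (δ (qq', b')).2.2 = (δ (qq, b)).2.2 := hεe.symm
        rw [hε] at hε'
      · -- ε = -1 : J = [inl q1, inr a, inr c]
        have ha : a = a' := by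
          have e1 := hfe 1; have e2 := hfe' 1
          rw [hε] at e1; rw [hε'] at e2
          simp only [tmJ, hε, hε'] at e1 e2
          norm_num [replaceWord3] at e1 e2
          have := e1.symm.trans ((congrFun hf 1).trans e2)
          simpa using this
        have hcw : (δ (qq, b)).2.1 = (δ (qq', b')).2.1 := by
          have e1 := hfe 2; have e2 := hfe' 2
          rw [hε] at e1; rw [hε'] at e2
          simp only [tmJ, hε, hε'] at e1 e2
          norm_num [replaceWord3] at e1 e2
          have := e1.symm.trans ((congrFun hf 2).trans e2)
          simpa using this
        obtain ⟨hqe, hbe⟩ := deltaB qhalt δ hΔinj hqq hqq' hq1 hcw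
        exact ⟨ha, hqe, hbe⟩
      · -- ε = 0 : J = [inr a, inl q1, inr c]
        have ha : a = a' := by
          have e1 := hfe (-1); have e2 := hfe' (-1)
          rw [hε] at e1; rw [hε'] at e2
          simp only [tmJ, hε, hε'] at e1 e2
          norm_num [replaceWord3] at e1 e2
          have := e1.symm.trans ((congrFun hf (-1)).trans e2)
          simpa using this
        have hcw : (δ (qq, b)).2.1 = (δ (qq', b')).2.1 := by
          have e1 := hfe 1; have e2 := hfe' 1
          rw [hε] at e1; rw [hε'] at e2
          simp only [tmJ, hε, hε'] at e1 e2
          norm_num [replaceWord3] at e1 e2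
          have := e1.symm.trans ((congrFun hf 1).trans e2)
          simpa using this
        obtain ⟨hqe, hbe⟩ := deltaB qhalt δ hΔinj hqq hqq' hq1 hcw
        exact ⟨ha, hqe, hbe⟩
      · -- ε = 1 : J = [inr a, inr c, inl q1]
        have ha : a = a' := by
          have e1 := hfe (-2); have e2 := hfe' (-2)
          rw [hε] at e1; rw [hε'] at e2
          simp only [tmJ, hε, hε'] at e1 e2
          norm_num [replaceWord3] at e1 e2
          have := e1.symm.trans ((congrFun hf (-2)).trans e2)
          simpa using this
        have hcw : (δ (qq, b)).2.1 = (δ (qq', b')).2.1 := by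
          have e1 := hfe (-1); have e2 := hfe' (-1)
          rw [hε] at e1; rw [hε'] at e2
          simp only [tmJ, hε, hε'] at e1 e2
          norm_num [replaceWord3] at e1 e2
          have := e1.symm.trans ((congrFun hf (-1)).trans e2)
          simpa using this
        obtain ⟨hqe, hbe⟩ := deltaB qhalt δ hΔinj hqq hqq' hq1 hcw
        exact ⟨ha, hqe, hbe⟩
    obtain ⟨rfl, rfl, rfl⟩ := hkey
    obtain ⟨hc1, hc2, hc3⟩ := coincides3 hc
    obtain ⟨hc1', hc2', hc3'⟩ := coincides3 hc'
    funext m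
    rcases eq_or_ne m (-1) with rfl | hm1
    · rw [hc1, hc1']
    rcases eq_or_ne m 0 with rfl | hm2
    · rw [hc2, hc2']
    rcases eq_or_ne m 1 with rfl | hm3
    · rw [hc3, hc3']
    have hlen : (tmJ δ ((-1 : ℤ), [Sum.inr a, Sum.inl qq, Sum.inr b])).length = 3 := by
      simp only [tmJ]
      split_ifs <;> rfl
    have hout : ¬(0 ≤ m - (-1) ∧ (m - (-1)).toNat <
        (tmJ δ ((-1 : ℤ), [Sum.inr a, Sum.inl qq, Sum.inr b])).length) := by
      rw [hlen]; omega
    have hmm : m - (δ (qq, b)).2.2 + (δ (qq, b)).2.2 = m := by ring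
    have e1 := hfe (m - (δ (qq, b)).2.2)
    have e2 := hfe' (m - (δ (qq, b)).2.2)
    rw [hmm] at e1 e2
    calc s m = replaceWord s (-1) (tmJ δ ((-1 : ℤ),
          [Sum.inr a, Sum.inl qq, Sum.inr b])) m := (replaceWord_out _ _ _ _ hout).symm
      _ = cgsApply (tmPairs qhalt) (tmJ δ) (tmH δ) s (m - (δ (qq, b)).2.2) := e1.symm
      _ = cgsApply (tmPairs qhalt) (tmJ δ) (tmH δ) s' (m - (δ (qq, b)).2.2) :=
          congrFun hf _
      _ = replaceWord s' (-1) (tmJ δ ((-1 : ℤ),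
          [Sum.inr a, Sum.inl qq, Sum.inr b])) m := e2
      _ = s' m := replaceWord_out _ _ _ _ hout
  · intro q t hq
    have hmem : ((-1, [Sum.inr (t (-1)), Sum.inl q, Sum.inr (t 0)]) :
        ℤ × List (Q ⊕ S)) ∈ tmPairs qhalt := ⟨t (-1), t 0, q, hq, rfl⟩
    have hco : Coincides (tmEnc (q, t))
        (-1, [Sum.inr (t (-1)), Sum.inl q, Sum.inr (t 0)]) := by
      refine coincides3' ?_ ?_ ?_ <;> norm_num [tmEnc]
    funext k
    rw [cgsApply_eval _ _ _ hAMO _ _ hmem hco]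
    have hH : tmH δ ((-1 : ℤ), [Sum.inr (t (-1)), Sum.inl q, Sum.inr (t 0)])
        = (δ (q, t 0)).2.2 := rfl
    rcases hδrange (q, t 0) with hε | hε | hε
    · have hJ : tmJ δ ((-1 : ℤ), [Sum.inr (t (-1)), Sum.inl q, Sum.inr (t 0)])
          = [Sum.inl (δ (q, t 0)).1, Sum.inr (t (-1)), Sum.inr (δ (q, t 0)).2.1] := by
        simp only [tmJ]
        rw [hε]
        norm_num
      rw [hH, hJ, hε, replaceWord3]
      simp only [tmEnc, tmStep, Function.update_apply]
      split_ifs <;> first | rfl | omega | (congr 2 <;> omega)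
    · have hJ : tmJ δ ((-1 : ℤ), [Sum.inr (t (-1)), Sum.inl q, Sum.inr (t 0)])
          = [Sum.inr (t (-1)), Sum.inl (δ (q, t 0)).1, Sum.inr (δ (q, t 0)).2.1] := by
        simp only [tmJ]
        rw [hε]
        norm_num
      rw [hH, hJ, hε, replaceWord3]
      simp only [tmEnc, tmStep, Function.update_apply]
      split_ifs <;> first | rfl | omega | (congr 2 <;> omega)
    · have hJ : tmJ δ ((-1 : ℤ), [Sum.inr (t (-1)), Sum.inl q, Sum.inr (t 0)])
          = [Sum.inr (t (-1)), Sum.inr (δ (q, t 0)).2.1, Sum.inl (δ (q, t 0)).1] := by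
        simp only [tmJ]
        rw [hε]
        norm_num
      rw [hH, hJ, hε, replaceWord3]
      simp only [tmEnc, tmStep, Function.update_apply]
      split_ifs <;> first | rfl | omega | (congr 2 <;> omega)
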